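/- Let ϕ : S → ℓᵖ be a disintegration (injective, separating, summative, never zero, with linearly dense range, on a tree S ⊆ ℕ*), with 1 ≤ p < ∞ and p ≠ 2. If C ⊆ S is an almost norm-maximizing chain, then the ⪯-infimum of ϕ[C] exists, is either 0 or an atom, and equals the limit in the ℓᵖ norm of ϕ(ν) as ν traverses C in increasing order. -/

import Mathlib

open scoped ENNReal
open Filter

noncomputable section

abbrev ellp (p : ℝ≥0∞) := lp (fun _ : ℕ => ℂ) p

/-- the standard basis vector `e n` -/
noncomputable def stdb (p : ℝ≥0∞) (n : ℕ) : ellp p := lp.single p n 1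

/-- `f` and `g` are disjointly supported -/
def DisjSupp {p : ℝ≥0∞} (f g : ellp p) : Prop := ∀ n : ℕ, f n = 0 ∨ g n = 0

/-- the subvector relation: `f = g · χ_A` for some `A ⊆ ℕ` -/
def Subvec {p : ℝ≥0∞} (f g : ellp p) : Prop :=
  ∃ A : Set ℕ, ⇑f = A.indicator ⇑g

/-- a tree is a prefix-closed set of finite sequences of naturals -/
def IsTree (S : Set (List ℕ)) : Prop := ∀ ν ∈ S, ∀ ν' : List ℕ, ν' <+: ν → ν' ∈ S

/-- `ν'` is a child of `ν` in `S` -/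
def ChildIn (S : Set (List ℕ)) (ν ν' : List ℕ) : Prop :=
  ν' ∈ S ∧ ∃ m : ℕ, ν' = ν ++ [m]

/-- `ν` is a nonterminal node of `S` -/
def Nonterminal (S : Set (List ℕ)) (ν : List ℕ) : Prop := ∃ ν', ChildIn S ν ν'

/-- a disintegration of `ℓᵖ`: injective, never zero, separating, summative, with
linearly dense range -/
structure Disintegration (p : ℝ≥0∞) [Fact (1 ≤ p)] (S : Set (List ℕ)) (φ : List ℕ → ellp p) : Prop where
  tree : IsTree S
  inj : Set.InjOn φ S
  nonzero : ∀ ν ∈ S, φ ν ≠ 0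
  separating : ∀ ν ∈ S, ∀ ν' ∈ S, ¬ν <+: ν' → ¬ν' <+: ν → DisjSupp (φ ν) (φ ν')
  summative : ∀ ν ∈ S, Nonterminal S ν →
    HasSum (fun μ : {μ : List ℕ // ChildIn S ν μ} => φ μ.val) (φ ν)
  dense : Dense (Submodule.span ℂ (φ '' S) : Set (ellp p))

/-- a chain with respect to the prefix (ancestor) order -/
def PrefixChain (C : Set (List ℕ)) : Prop := ∀ ν ∈ C, ∀ ν' ∈ C, ν <+: ν' ∨ ν' <+: ν

/-- an almost norm-maximizing chain -/
def ANMChain (p : ℝ≥0∞) (S : Set (List ℕ)) (φ : List ℕ → ellp p)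
    (C : Set (List ℕ)) : Prop :=
  C ⊆ S ∧ PrefixChain C ∧ ∀ ν ∈ C, Nonterminal S ν →
    ∃ ν', ν' ∈ C ∧ ChildIn S ν ν' ∧ ∀ μ, ChildIn S ν μ →
      ‖φ μ‖ ^ p.toReal ≤ ‖φ ν'‖ ^ p.toReal + 2 ^ (-(ν.length : ℤ))

/-- `g` is the greatest lower bound of `A` in the subvector order -/
def IsSubvecGLB {p : ℝ≥0∞} (g : ellp p) (A : Set (ellp p)) : Prop :=
  (∀ h ∈ A, Subvec g h) ∧ ∀ g', (∀ h ∈ A, Subvec g' h) → Subvec g' g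

set_option linter.unusedSectionVars false

lemma Subvec.apply_eq {p : ℝ≥0∞} {f g : ellp p} (h : Subvec f g) {n : ℕ} (hn : f n ≠ 0) : f n = g n := by
  obtain ⟨A, hA⟩ := h
  have hA' := congrFun hA n
  by_cases hnA : n ∈ A
  · rwa [Set.indicator_of_mem hnA] at hA'
  · rw [Set.indicator_of_notMem hnA] at hA'; exact absurd hA' hn

namespace Stmt10Aux

variable {p : ℝ≥0∞} [Fact (1 ≤ p)]

lemma p_ne_zero : p ≠ 0 := by
  have h : (1:ℝ≥0∞) ≤ p := Fact.out
  intro hp; rw [hp] at h; simp at h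

def evalCLM (p : ℝ≥0∞) [Fact (1 ≤ p)] (n : ℕ) : ellp p →L[ℂ] ℂ :=
  LinearMap.mkContinuous
    { toFun := fun f => f n
      map_add' := fun f g => by simpa using congrFun (lp.coeFn_add f g) n
      map_smul' := fun c f => by simpa using congrFun (lp.coeFn_smul c f) n }
    1 (fun f => by rw [one_mul]; exact lp.norm_apply_le_norm p_ne_zero f n)

@[simp] lemma evalCLM_apply (n : ℕ) (f : ellp p) : evalCLM p n f = f n := rfl

lemma subvec_refl (f : ellp p) : Subvec f f := ⟨Set.univ, by simp⟩

lemma subvec_trans {f g h : ellp p} (h1 : Subvec f g) (h2 : Subvec g h) : Subvec f h := by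
  obtain ⟨A, hA⟩ := h1; obtain ⟨B, hB⟩ := h2
  refine ⟨A ∩ B, funext fun n => ?_⟩
  have hA' := congrFun hA n
  have hB' := congrFun hB n
  by_cases hn : n ∈ A <;> by_cases hn' : n ∈ B <;>
    simp_all [Set.indicator_apply, hn, hn']

lemma subvec_norm_add (hptop : p ≠ ∞) {f g : ellp p} (h : Subvec f g) :
    ‖f‖ ^ p.toReal + ‖g - f‖ ^ p.toReal = ‖g‖ ^ p.toReal := by
  obtain ⟨A, hA⟩ := h
  have hq : 0 < p.toReal := ENNReal.toReal_pos p_ne_zero hptop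
  rw [lp.norm_rpow_eq_tsum hq, lp.norm_rpow_eq_tsum hq, lp.norm_rpow_eq_tsum hq,
    ← Summable.tsum_add ((lp.memℓp f).summable hq) ((lp.memℓp (g-f)).summable hq)]
  refine tsum_congr fun n => ?_
  have hsub : (g - f) n = g n - f n := by rw [lp.coeFn_sub]; rfl
  have hA' := congrFun hA n
  by_cases hn : n ∈ A
  · rw [Set.indicator_of_mem hn] at hA'
    rw [hsub, hA', sub_self, norm_zero, Real.zero_rpow hq.ne', add_zero]
  · rw [Set.indicator_of_notMem hn] at hA'
    rw [hsub, hA', norm_zero, Real.zero_rpow hq.ne', sub_zero, zero_add]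

lemma subvec_norm_le (hptop : p ≠ ∞) {f g : ellp p} (h : Subvec f g) :
    ‖f‖ ^ p.toReal ≤ ‖g‖ ^ p.toReal := by
  rw [← subvec_norm_add hptop h]
  have := Real.rpow_nonneg (norm_nonneg (g - f)) p.toReal
  linarith

variable {S : Set (List ℕ)} {φ : List ℕ → ellp p}

lemma child_subvec (hφ : Disintegration p S φ) {μ ν : List ℕ} (hμ : μ ∈ S)
    (hc : ChildIn S μ ν) : Subvec (φ ν) (φ μ) := by
  have hsum := hφ.summative μ hμ ⟨ν, hc⟩
  refine ⟨{n | φ ν n ≠ 0}, funext fun n => ?_⟩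
  by_cases hn : φ ν n = 0
  · simp [Set.indicator_apply, hn]
  · have hpt : HasSum (fun c : {μ' // ChildIn S μ μ'} => φ c.val n) (φ μ n) :=
      (evalCLM p n).hasSum hsum
    have heq : (fun c : {μ' // ChildIn S μ μ'} => φ c.val n)
        = fun c => if c = ⟨ν, hc⟩ then φ ν n else 0 := by
      funext c
      by_cases hcv : c = (⟨ν, hc⟩ : {μ' // ChildIn S μ μ'})
      · rw [hcv]; simp
      · have hnev : c.val ≠ ν := fun h => hcv (Subtype.ext h)
        have hninc1 : ¬ c.val <+: ν := by
          intro hpre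
          obtain ⟨m, hm⟩ := hc.2; obtain ⟨m', hm'⟩ := c.2.2
          exact hnev (hpre.eq_of_length (by rw [hm, hm']; simp))
        have hninc2 : ¬ ν <+: c.val := by
          intro hpre
          obtain ⟨m, hm⟩ := hc.2; obtain ⟨m', hm'⟩ := c.2.2
          exact hnev ((hpre.eq_of_length (by rw [hm, hm']; simp)).symm)
        have hdisj := hφ.separating c.val c.2.1 ν hc.1 hninc1 hninc2
        rcases hdisj n with h | h
        · simp [hcv, h]
        · exact absurd h hn
    rw [heq] at hpt
    have h2 : HasSum (fun c : {μ' // ChildIn S μ μ'} => if c = ⟨ν, hc⟩ then φ ν n else 0)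
        (φ ν n) := hasSum_ite_eq _ _
    have := hpt.unique h2
    rw [Set.indicator_of_mem (by exact hn : n ∈ {n | φ ν n ≠ 0})]
    exact this.symm

lemma prefix_subvec_aux (hφ : Disintegration p S φ) :
    ∀ t : List ℕ, ∀ μ : List ℕ, μ ∈ S → μ ++ t ∈ S → Subvec (φ (μ ++ t)) (φ μ) := by
  intro t
  induction t with
  | nil => intro μ hμ _; simpa using subvec_refl (φ μ)
  | cons a t ih =>
    intro μ hμ hμt
    have hμ' : μ ++ [a] ∈ S := hφ.tree _ hμt (μ ++ [a]) ⟨t, by simp⟩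
    have h1 : Subvec (φ (μ ++ [a])) (φ μ) := child_subvec hφ hμ ⟨hμ', a, rfl⟩
    have h2 : Subvec (φ ((μ ++ [a]) ++ t)) (φ (μ ++ [a])) :=
      ih (μ ++ [a]) hμ' (by simpa using hμt)
    have he : μ ++ a :: t = (μ ++ [a]) ++ t := by simp
    rw [he]; exact subvec_trans h2 h1

lemma prefix_subvec (hφ : Disintegration p S φ) {μ ν : List ℕ} (hμ : μ ∈ S) (hν : ν ∈ S)
    (hpre : μ <+: ν) : Subvec (φ ν) (φ μ) := by
  obtain ⟨t, rfl⟩ := hpre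
  exact prefix_subvec_aux hφ t μ hμ hν

end Stmt10Aux

open Stmt10Aux

/-- along an almost norm-maximizing chain of a disintegration, the
⪯-infimum exists, is `0` or an atom, and is the norm limit of `φ(ν)`. -/
theorem stmt_10 (p : ℝ≥0∞) [Fact (1 ≤ p)] (hptop : p ≠ ∞) (hp2 : p ≠ 2)
    (S : Set (List ℕ)) (φ : List ℕ → ellp p) (hφ : Disintegration p S φ)
    (C : Set (List ℕ)) (hC : ANMChain p S φ C) (hCne : C.Nonempty) :
    ∃ g : ellp p, IsSubvecGLB g (φ '' C) ∧
      (g = 0 ∨ ∃ n : ℕ, {m : ℕ | g m ≠ 0} = {n}) ∧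
      ∀ ε : ℝ, 0 < ε → ∃ ν ∈ C, ∀ ν' ∈ C, ν <+: ν' → ‖φ ν' - g‖ < ε := by
  classical
  obtain ⟨hCS, hchain, hanm⟩ := hC
  have hq : 0 < p.toReal := ENNReal.toReal_pos p_ne_zero hptop
  -- Step 1: build a monotone cofinal sequence in C
  have hseq : ∃ ν : ℕ → List ℕ, (∀ k, ν k ∈ C) ∧ (∀ j k, j ≤ k → ν j <+: ν k) ∧
      (∀ μ ∈ C, ∃ k, μ <+: ν k) ∧
      (∀ μ ∈ S, (∃ k, μ <+: ν k) ∨ ∃ k, ¬μ <+: ν k ∧ ¬ν k <+: μ) := by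
    by_cases hmax : ∃ ν₀ ∈ C, ∀ μ ∈ C, μ <+: ν₀
    · obtain ⟨ν₀, hν₀C, hν₀max⟩ := hmax
      refine ⟨fun _ => ν₀, fun _ => hν₀C, fun _ _ _ => List.prefix_rfl,
        fun μ hμ => ⟨0, hν₀max μ hμ⟩, ?_⟩
      intro μ hμ
      by_cases h1 : μ <+: ν₀
      · exact Or.inl ⟨0, h1⟩
      · refine Or.inr ⟨0, h1, ?_⟩
        intro h2
        obtain ⟨t, rfl⟩ := h2
        match t, h1, hμ with
        | [], h1, hμ => exact h1 (by simp)
        | a :: t, h1, hμ =>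
          have hch : ν₀ ++ [a] ∈ S := hφ.tree _ hμ (ν₀ ++ [a]) ⟨t, by simp⟩
          obtain ⟨ν', hν'C, hν'child, -⟩ :=
            hanm ν₀ hν₀C ⟨ν₀ ++ [a], hch, a, rfl⟩
          obtain ⟨m, rfl⟩ := hν'child.2
          have := (hν₀max _ hν'C).length_le
          simp at this
    · push_neg at hmax
      have hstep : ∀ x : {μ // μ ∈ C}, ∃ y : {μ // μ ∈ C},
          x.val <+: y.val ∧ x.val.length < y.val.length := by
        rintro ⟨μ, hμ⟩
        obtain ⟨μ', hμ'C, hnpre⟩ := hmax μ hμ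
        rcases hchain μ hμ μ' hμ'C with h | h
        · refine ⟨⟨μ', hμ'C⟩, h, ?_⟩
          rcases lt_or_eq_of_le h.length_le with h' | h'
          · exact h'
          · exact absurd (h.eq_of_length h' ▸ List.prefix_rfl) hnpre
        · exact absurd h hnpre
      choose F hF1 hF2 using hstep
      obtain ⟨μ₀, hμ₀⟩ := hCne
      set sq : ℕ → {μ // μ ∈ C} := fun k => F^[k] ⟨μ₀, hμ₀⟩ with hsqdef
      have hsucc : ∀ k, sq (k + 1) = F (sq k) := fun k => Function.iterate_succ_apply' F k _
      have hstep' : ∀ k, (sq k).val <+: (sq (k+1)).val ∧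
          (sq k).val.length < (sq (k+1)).val.length := fun k => by
        rw [hsucc]; exact ⟨hF1 _, hF2 _⟩
      have hmono : ∀ j k, j ≤ k → (sq j).val <+: (sq k).val := by
        intro j k hjk
        induction hjk with
        | refl => exact List.prefix_rfl
        | step h ih => exact ih.trans (hstep' _).1
      have hlen : ∀ k, k ≤ (sq k).val.length := by
        intro k
        induction k with
        | zero => exact Nat.zero_le _
        | succ k ih => have := (hstep' k).2; omega
      refine ⟨fun k => (sq k).val, fun k => (sq k).2, hmono, ?_, ?_⟩
      · intro μ hμ
        rcases hchain μ hμ _ (sq μ.length).2 with h | h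
        · exact ⟨μ.length, h⟩
        · have h1 := h.length_le
          have h2 := hlen μ.length
          have he : (sq μ.length).val = μ := h.eq_of_length (by omega)
          refine ⟨μ.length, ?_⟩
          show μ <+: (sq μ.length).val
          rw [he]
      · intro μ hμ
        by_cases hex : ∃ k, μ <+: (sq k).val
        · exact Or.inl hex
        · push_neg at hex
          refine Or.inr ⟨μ.length + 1, hex _, ?_⟩
          intro h
          have h1 : ((sq (μ.length + 1)).val).length ≤ μ.length := h.length_le
          have h2 := hlen (μ.length + 1)
          omega
  obtain ⟨ν, hνC, hνmono, hνcof, hνdich⟩ := hseq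
  have hνS : ∀ k, ν k ∈ S := fun k => hCS (hνC k)
  have hsv : ∀ j k, j ≤ k → Subvec (φ (ν k)) (φ (ν j)) := fun j k hjk =>
    prefix_subvec hφ (hνS j) (hνS k) (hνmono j k hjk)
  -- Step 2: norms converge, sequence is Cauchy
  set q := p.toReal with hqdef
  set r : ℕ → ℝ := fun k => ‖φ (ν k)‖ ^ q with hrdef
  have hr_anti : Antitone r := fun j k hjk => subvec_norm_le hptop (hsv j k hjk)
  have hr_nonneg : ∀ k, 0 ≤ r k := fun k => Real.rpow_nonneg (norm_nonneg _) q
  have hbdd : BddBelow (Set.range r) := ⟨0, by rintro x ⟨k, rfl⟩; exact hr_nonneg k⟩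
  set L := ⨅ k, r k with hLdef
  have hL : Tendsto r atTop (nhds L) := tendsto_atTop_ciInf hr_anti hbdd
  have hLle : ∀ k, L ≤ r k := fun k => ciInf_le hbdd k
  have hdiff : ∀ a b : ℕ, a ≤ b → ‖φ (ν a) - φ (ν b)‖ ^ q = r a - r b := by
    intro a b hab
    have := subvec_norm_add hptop (hsv a b hab)
    simp only [hrdef, hqdef] at this ⊢
    linarith
  have hcau : CauchySeq (fun k => φ (ν k)) := by
    apply cauchySeq_of_le_tendsto_0 (fun N => (r N - L) ^ q⁻¹)
    · have key : ∀ N a b : ℕ, N ≤ a → a ≤ b →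
          dist (φ (ν a)) (φ (ν b)) ≤ (r N - L) ^ q⁻¹ := by
        intro N a b hNa hab
        rw [dist_eq_norm]
        have hBnn : (0:ℝ) ≤ r N - L := by have := hLle N; linarith
        rw [← Real.rpow_le_rpow_iff (norm_nonneg _) (Real.rpow_nonneg hBnn _) hq,
          Real.rpow_inv_rpow hBnn hq.ne']
        rw [hdiff a b hab]
        have h1 := hr_anti hNa
        have h2 := hLle b
        linarith
      intro a b N hNa hNb
      rcases le_total a b with h | h
      · exact key N a b hNa h
      · rw [dist_comm]; exact key N b a hNb h
    · have h1 : Tendsto (fun N => r N - L) atTop (nhds 0) := by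
        simpa using hL.sub (tendsto_const_nhds (x := L))
      have h2 := h1.rpow_const (p := q⁻¹) (Or.inr (by positivity))
      simpa [Real.zero_rpow (inv_ne_zero hq.ne')] using h2
  obtain ⟨g, hg⟩ := cauchySeq_tendsto_of_complete hcau
  -- Step 3: coordinatewise convergence and the key constancy property
  have hcoord : ∀ n, Tendsto (fun k => φ (ν k) n) atTop (nhds (g n)) := by
    intro n
    rw [tendsto_iff_norm_sub_tendsto_zero]
    have h1 : Tendsto (fun k => ‖φ (ν k) - g‖) atTop (nhds 0) :=
      tendsto_iff_norm_sub_tendsto_zero.mp hg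
    refine squeeze_zero (fun k => norm_nonneg _) (fun k => ?_) h1
    have he : φ (ν k) n - g n = (φ (ν k) - g) n := by rw [lp.coeFn_sub]; rfl
    rw [he]
    exact lp.norm_apply_le_norm p_ne_zero _ n
  have hdic : ∀ n, ∀ j k : ℕ, j ≤ k → φ (ν k) n = φ (ν j) n ∨ φ (ν k) n = 0 := by
    intro n j k hjk
    obtain ⟨A, hA⟩ := hsv j k hjk
    have hA' := congrFun hA n
    by_cases hnA : n ∈ A
    · left; rw [hA', Set.indicator_of_mem hnA]
    · right; rw [hA', Set.indicator_of_notMem hnA]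
  have hkey : ∀ n, g n ≠ 0 → ∀ k, φ (ν k) n = g n := by
    intro n hn
    have hne : ∀ k, φ (ν k) n ≠ 0 := by
      intro k hk0
      have hz : ∀ j, k ≤ j → φ (ν j) n = 0 := by
        intro j hj
        rcases hdic n k j hj with h | h
        · rw [h, hk0]
        · exact h
      have hlim0 : Tendsto (fun j => φ (ν j) n) atTop (nhds 0) :=
        Tendsto.congr' (EventuallyEq.symm (eventually_atTop.2 ⟨k, hz⟩)) tendsto_const_nhds
      exact hn (tendsto_nhds_unique (hcoord n) hlim0)
    intro k
    have hcst : ∀ j, φ (ν j) n = φ (ν 0) n := by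
      intro j
      rcases hdic n 0 j (Nat.zero_le j) with h | h
      · exact h
      · exact absurd h (hne j)
    have hlimc : Tendsto (fun j => φ (ν j) n) atTop (nhds (φ (ν 0) n)) := by
      simp only [funext hcst]; exact tendsto_const_nhds
    have := tendsto_nhds_unique (hcoord n) hlimc
    rw [hcst k, ← this]
  -- Step 4: g is a lower bound
  have hlbseq : ∀ k, Subvec g (φ (ν k)) := by
    intro k
    refine ⟨{n | g n ≠ 0}, funext fun n => ?_⟩
    by_cases hn : g n = 0
    · rw [Set.indicator_of_notMem (by simpa using hn), hn]
    · rw [Set.indicator_of_mem (by exact hn)]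
      exact (hkey n hn k).symm
  have hlbC : ∀ μ ∈ C, Subvec g (φ μ) := by
    intro μ hμ
    obtain ⟨k, hk⟩ := hνcof μ hμ
    exact subvec_trans (hlbseq k) (prefix_subvec hφ (hCS hμ) (hνS k) hk)
  refine ⟨g, ⟨?_, ?_⟩, ?_, ?_⟩
  · rintro _ ⟨μ, hμ, rfl⟩
    exact hlbC μ hμ
  · -- GLB property
    intro g' hg'
    refine ⟨{n | g' n ≠ 0}, funext fun n => ?_⟩
    by_cases hn : g' n = 0
    · rw [Set.indicator_of_notMem (by simpa using hn), hn]
    · rw [Set.indicator_of_mem (by exact hn)]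
      have hk : ∀ k, φ (ν k) n = g' n := fun k =>
        ((hg' _ ⟨ν k, hνC k, rfl⟩).apply_eq hn).symm
      have hlimc : Tendsto (fun j => φ (ν j) n) atTop (nhds (g' n)) := by
        simp only [funext hk]; exact tendsto_const_nhds
      exact (tendsto_nhds_unique (hcoord n) hlimc).symm
  · -- zero or atom
    by_cases hg0 : g = 0
    · exact Or.inl hg0
    right
    have hex : ∃ n, g n ≠ 0 := by
      by_contra h
      push_neg at h
      exact hg0 (lp.eq_zero_iff_coeFn_eq_zero.mpr (funext fun n => h n))
    obtain ⟨n₁, hn₁⟩ := hex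
    refine ⟨n₁, ?_⟩
    ext m
    simp only [Set.mem_setOf_eq, Set.mem_singleton_iff]
    constructor
    · intro hm
      by_contra hmn
      set T : ellp p →L[ℂ] ℂ := g m • evalCLM p n₁ - g n₁ • evalCLM p m with hTdef
      have hTapp : ∀ f : ellp p, T f = g m * f n₁ - g n₁ * f m := by
        intro f
        simp [hTdef, ContinuousLinearMap.sub_apply, ContinuousLinearMap.smul_apply,
          smul_eq_mul]
      have hTφ : ∀ μ ∈ S, T (φ μ) = 0 := by
        intro μ hμ
        rw [hTapp]
        rcases hνdich μ hμ with ⟨k, hpre⟩ | ⟨k, h1, h2⟩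
        · have hsub : Subvec g (φ μ) :=
            subvec_trans (hlbseq k) (prefix_subvec hφ hμ (hνS k) hpre)
          rw [← hsub.apply_eq hn₁, ← hsub.apply_eq hm]
          ring
        · have hdisj := hφ.separating μ hμ (ν k) (hνS k) h1 h2
          have e1 : φ μ n₁ = 0 := by
            rcases hdisj n₁ with h | h
            · exact h
            · exact absurd (by rw [← hkey n₁ hn₁ k, h]) hn₁.elim
          have e2 : φ μ m = 0 := by
            rcases hdisj m with h | h
            · exact h
            · exact absurd (by rw [← hkey m hm k, h]) hm.elim
          rw [e1, e2]; ring
      have hker : ∀ f : ellp p, T f = 0 := by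
        have hclosed : IsClosed {f : ellp p | T f = 0} :=
          isClosed_eq T.continuous continuous_const
        have hspan : (Submodule.span ℂ (φ '' S) : Set (ellp p)) ⊆ {f | T f = 0} := by
          intro f hf
          have hf' : f ∈ Submodule.span ℂ (φ '' S) := hf
          clear hf
          show T f = 0
          induction hf' using Submodule.span_induction with
          | mem x hx => obtain ⟨μ, hμ, rfl⟩ := hx; exact hTφ μ hμ
          | zero => simp
          | add x y hx hy ihx ihy => rw [map_add, ihx, ihy, add_zero]
          | smul c x hx ihx => rw [map_smul, ihx, smul_zero]
        intro f
        have hsub : closure (Submodule.span ℂ (φ '' S) : Set (ellp p)) ⊆ {f | T f = 0} :=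
          closure_minimal hspan hclosed
        exact hsub (by rw [hφ.dense.closure_eq]; trivial)
      have h0 := hker (lp.single p n₁ 1)
      rw [hTapp] at h0
      rw [lp.single_apply_self, lp.single_apply_ne p n₁ 1 hmn] at h0
      simp at h0
      exact hmn (by exact absurd h0 (by tauto)) |>.elim
    · rintro rfl; exact hn₁
  · -- norm convergence
    intro ε hε
    have hεq : 0 < ε ^ q := Real.rpow_pos_of_pos hε q
    have hnormq : Tendsto r atTop (nhds (‖g‖ ^ q)) := by
      have := (hg.norm).rpow_const (Or.inr hq.le)
      exact this
    have hev : ∀ᶠ k in atTop, r k < ‖g‖ ^ q + ε ^ q :=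
      hnormq.eventually_lt_const (lt_add_of_pos_right _ hεq)
    obtain ⟨k, hk⟩ := hev.exists
    refine ⟨ν k, hνC k, ?_⟩
    intro ν' hν' hpre
    have hsub1 : Subvec g (φ ν') := hlbC ν' hν'
    have hsub2 : Subvec (φ ν') (φ (ν k)) :=
      prefix_subvec hφ (hνS k) (hCS hν') hpre
    have hid : ‖g‖ ^ q + ‖φ ν' - g‖ ^ q = ‖φ ν'‖ ^ q := subvec_norm_add hptop hsub1
    have hle : ‖φ ν'‖ ^ q ≤ r k := subvec_norm_le hptop hsub2
    have hlt : ‖φ ν' - g‖ ^ q < ε ^ q := by linarith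
    by_contra hcon
    push_neg at hcon
    exact absurd hlt (not_lt.mpr (Real.rpow_le_rpow hε.le hcon hq.le))
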